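/- Let H be a nontrivial group and let G = ℤ ∗ H be the free product (coproduct in the category of groups) of ℤ and H. Then G, regarded as a semigroup, does not belong to Tak(𝒮). Concretely, writing a for the image in G of a generator of ℤ and choosing b in the image of H with b ≠ 1, and letting S_n be the subsemigroup of G generated by the two elements a^{−2} and a^{2n−1}b, the chain S_1 ⊆ S_2 ⊆ ⋯ is an ascending chain of subsemigroups of rank at most 2 in which every inclusion is strict. -/

import Mathlib

open Monoid
open scoped Monoid.Coprod

namespace TakAux

open Multiplicative

universe u

variable (H : Type u) [Group H]

abbrev Cf : Bool → Type u := fun b => cond b (ULift.{u} (Multiplicative ℤ)) H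

instance cfGroup : ∀ b, Group (Cf H b) := fun b =>
  Bool.rec (inferInstanceAs (Group H)) (inferInstanceAs (Group (ULift (Multiplicative ℤ)))) b

/-- `up` as a monoid hom. -/
def upHom : Multiplicative ℤ →* ULift (Multiplicative ℤ) where
  toFun := ULift.up
  map_one' := rfl
  map_mul' _ _ := rfl

def al (e : ℤ) : CoprodI (Cf H) := CoprodI.of (i := true) (ULift.up (ofAdd e))

variable {H}

def be (h : H) : CoprodI (Cf H) := CoprodI.of (i := false) h

lemma al_mul (s t : ℤ) : al H s * al H t = al H (s + t) := by
  rw [al, al, al, ofAdd_add, ← map_mul]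
  rfl

lemma al_zero : al H 0 = 1 := by
  rw [al, ofAdd_zero]
  exact map_one (CoprodI.of (i := true))

def wp (h : H) (es : List ℤ) (t : ℤ) : CoprodI (Cf H) :=
  (es.map fun e => al H e * be h).prod * al H t

lemma wp_nil (h : H) (t : ℤ) : wp h [] t = al H t := by simp [wp]

lemma wp_mul_nil (h : H) (es : List ℤ) (t s : ℤ) :
    wp h es t * wp h [] s = wp h es (t + s) := by
  rw [wp_nil, wp, wp, mul_assoc, al_mul]

lemma wp_mul_cons (h : H) (es : List ℤ) (t : ℤ) (f : ℤ) (fs : List ℤ) (s : ℤ) :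
    wp h es t * wp h (f :: fs) s = wp h (es ++ (t + f) :: fs) s := by
  simp only [wp, List.map_cons, List.map_append, List.prod_cons, List.prod_append, ← al_mul]
  group

def Cond (n : ℕ) (es : List ℤ) (t : ℤ) : Prop :=
  (∀ e ∈ es, Odd e ∧ e ≤ 2 * (n : ℤ) + 1) ∧ (es = [] → t ≤ -2) ∧ t ≤ 0 ∧ Even t

lemma mem_closure_shape (h : H) (n : ℕ) {u : CoprodI (Cf H)}
    (hu : u ∈ Subsemigroup.closure {al H (-2), al H (2 * (n : ℤ) + 1) * be h}) :
    ∃ es t, Cond n es t ∧ u = wp h es t := by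
  induction hu using Subsemigroup.closure_induction with
  | mem z hz =>
    rcases hz with rfl | rfl
    · refine ⟨[], -2, ⟨by simp, fun _ => le_refl _, by norm_num, by decide⟩, ?_⟩
      rw [wp_nil]
    · refine ⟨[2 * (n : ℤ) + 1], 0, ⟨?_, by simp, le_refl _, Even.zero⟩, ?_⟩
      · rintro e he
        simp only [List.mem_singleton] at he
        subst he
        exact ⟨⟨n, by ring⟩, le_refl _⟩
      · simp [wp, al_zero]
  | mul u v _ _ hu hv =>
    obtain ⟨es, t, ⟨h1, h2, h3, h4⟩, rfl⟩ := hu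
    obtain ⟨fs, s, ⟨g1, g2, g3, g4⟩, rfl⟩ := hv
    cases fs with
    | nil =>
      refine ⟨es, t + s, ⟨h1, ?_, ?_, h4.add g4⟩, (wp_mul_nil h es t s)⟩
      · intro he; have := h2 he; have := g2 rfl; omega
      · have := g2 rfl; omega
    | cons f fs' =>
      refine ⟨es ++ (t + f) :: fs', s, ⟨?_, ?_, g3, g4⟩,
        (wp_mul_cons h es t f fs' s)⟩
      · intro e he
        rcases List.mem_append.mp he with he | he
        · exact h1 e he
        · rcases List.mem_cons.mp he with rfl | he
          · obtain ⟨hf1, hf2⟩ := g1 f List.mem_cons_self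
            exact ⟨h4.add_odd hf1, by omega⟩
          · exact g1 e (List.mem_cons_of_mem _ he)
      · intro hcon; exact absurd hcon (by simp)

def encL (h : H) (t : ℤ) : List ℤ → List (Σ b, Cf H b)
  | [] => if t = 0 then [] else [⟨true, ULift.up (ofAdd t)⟩]
  | e :: es => ⟨true, ULift.up (ofAdd e)⟩ :: ⟨false, h⟩ :: encL h t es

lemma encL_cons (h : H) (t e : ℤ) (es : List ℤ) :
    encL h t (e :: es) = ⟨true, ULift.up (ofAdd e)⟩ :: ⟨false, h⟩ :: encL h t es := rfl

lemma encL_nil_len (h : H) (t : ℤ) : (encL h t []).length ≤ 1 := by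
  rw [encL]
  split_ifs <;> simp

lemma encL_zero_single (h : H) (e : ℤ) :
    encL h 0 [e] = [⟨true, ULift.up (ofAdd e)⟩, ⟨false, h⟩] := by
  rw [encL_cons, encL, if_pos rfl]

lemma encL_ne_one {h : H} (hh : h ≠ 1) (t : ℤ) :
    ∀ es : List ℤ, (∀ e ∈ es, e ≠ 0) → ∀ l ∈ encL h t es, Sigma.snd l ≠ 1
  | [], _ => by
    intro l hl
    rw [encL] at hl
    split_ifs at hl with ht
    · simp at hl
    · simp only [List.mem_singleton] at hl
      subst hl
      exact fun hc => ht (ofAdd_eq_one.mp (congrArg ULift.down hc))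
  | e :: es, hes => by
    intro l hl
    rw [encL] at hl
    rcases List.mem_cons.mp hl with rfl | hl
    · exact fun hc => (hes e List.mem_cons_self) (ofAdd_eq_one.mp (congrArg ULift.down hc))
    rcases List.mem_cons.mp hl with rfl | hl
    · exact hh
    · exact encL_ne_one hh t es (fun e' he' => hes e' (List.mem_cons_of_mem _ he')) l hl

lemma encL_head_true (h : H) (t : ℤ) (es : List ℤ) :
    ∀ l ∈ (encL h t es).head?, Sigma.fst l = true := by
  cases es with
  | nil =>
    rw [encL]
    split_ifs
    · simp
    · simp
  | cons e es => rw [encL]; simp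

lemma encL_chain (h : H) (t : ℤ) :
    ∀ es : List ℤ, (encL h t es).Chain' (fun l l' => Sigma.fst l ≠ Sigma.fst l')
  | [] => by
    rw [encL]
    split_ifs
    · exact List.isChain_nil
    · exact List.isChain_singleton _
  | e :: es => by
    rw [encL]
    refine List.isChain_cons.mpr ⟨?_, List.isChain_cons.mpr ⟨?_, encL_chain h t es⟩⟩
    · intro y hy
      rw [List.head?_cons, Option.mem_some_iff] at hy
      subst hy
      simp
    · intro y hy
      have := encL_head_true h t es y hy
      simp [this]

def encW (h : H) (hh : h ≠ 1) (t : ℤ) (es : List ℤ) (hes : ∀ e ∈ es, e ≠ 0) :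
    CoprodI.Word (Cf H) :=
  { toList := encL h t es
    ne_one := encL_ne_one hh t es hes
    chain_ne := encL_chain h t es }

lemma encW_prod (h : H) (hh : h ≠ 1) (t : ℤ) :
    ∀ (es : List ℤ) (hes : ∀ e ∈ es, e ≠ 0),
      (encW h hh t es hes).prod = wp h es t
  | [], hes => by
    rw [CoprodI.Word.prod, encW]
    simp only [encL]
    split_ifs with ht
    · subst ht
      simp [wp_nil, al_zero]
    · simp only [List.map_cons, List.map_nil, List.prod_cons, List.prod_nil, mul_one, wp_nil, al]
  | e :: es, hes => by
    have ih := encW_prod h hh t es (fun e' he' => hes e' (List.mem_cons_of_mem _ he'))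
    rw [CoprodI.Word.prod, encW] at ih ⊢
    simp only [encL, List.map_cons, List.prod_cons]
    rw [ih]
    simp only [wp, List.map_cons, List.prod_cons]
    rw [be, mul_assoc, mul_assoc]
    rfl

lemma odd_ne_zero {e : ℤ} (he : Odd e) : e ≠ 0 := by
  rw [Int.odd_iff] at he; omega

/-- Key lemma: the new generator is not in the old subsemigroup (CoprodI side). -/
lemma key (h : H) (hh : h ≠ 1) (n : ℕ) :
    al H (2 * (n : ℤ) + 3) * be h ∉
      Subsemigroup.closure {al H (-2), al H (2 * (n : ℤ) + 1) * be h} := by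
  intro hmem
  obtain ⟨es, t, ⟨h1, _, _, _⟩, hEq⟩ := mem_closure_shape h n hmem
  have hne : ∀ e ∈ es, e ≠ 0 := fun e he => odd_ne_zero (h1 e he).1
  have hne' : ∀ e ∈ [2 * (n : ℤ) + 3], e ≠ 0 := by
    intro e he
    simp only [List.mem_singleton] at he
    omega
  have h2 : wp h [2 * (n : ℤ) + 3] 0 = al H (2 * (n : ℤ) + 3) * be h := by
    simp [wp, al_zero]
  haveI hdec : ∀ b, DecidableEq (Cf H b) := fun b => Classical.decEq _
  have hinj : Function.Injective (CoprodI.Word.prod : CoprodI.Word (Cf H) → CoprodI (Cf H)) :=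
    fun w1 w2 hw =>
      (@CoprodI.Word.equiv Bool (Cf H) (fun b => (cfGroup H b).toMonoid)
        instDecidableEqBool hdec).symm.injective hw
  have hW : encW h hh t es hne = encW h hh 0 [2 * (n : ℤ) + 3] hne' := by
    apply hinj
    rw [encW_prod, encW_prod, ← hEq, h2]
  have hL : encL h t es = encL h 0 [2 * (n : ℤ) + 3] := congrArg CoprodI.Word.toList hW
  cases es with
  | nil =>
    rw [encL_zero_single] at hL
    have hlen := congrArg List.length hL
    have := encL_nil_len h t
    rw [hlen] at this
    simp at this
  | cons e es' =>
    rw [encL_cons, encL_zero_single] at hL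
    injection hL with hhd htl
    have he' : e = 2 * (n : ℤ) + 3 := by
      injection hhd with _ hsnd
      exact ofAdd.injective (congrArg ULift.down hsnd)
    have hle := (h1 e List.mem_cons_self).2
    rw [he'] at hle
    linarith

/-- Transfer of membership through the canonical hom to `CoprodI`. -/
lemma not_mem_coprod (h : H) (hh : h ≠ 1) (n : ℕ) :
    (Coprod.inl (ofAdd (1 : ℤ)) : (Multiplicative ℤ) ∗ H) ^ (2 * (n + 1) + 1) * Coprod.inr h ∉
      Subsemigroup.closure
        {(Coprod.inl (ofAdd (1 : ℤ)) : (Multiplicative ℤ) ∗ H)⁻¹ * (Coprod.inl (ofAdd (1 : ℤ)))⁻¹,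
         (Coprod.inl (ofAdd (1 : ℤ)) : (Multiplicative ℤ) ∗ H) ^ (2 * n + 1) * Coprod.inr h} := by
  intro hmem
  set F : (Multiplicative ℤ) ∗ H →* CoprodI (Cf H) :=
    Coprod.lift ((CoprodI.of (M := Cf H) (i := true)).comp upHom) (CoprodI.of (M := Cf H) (i := false)) with hF
  have hFa : ∀ m : ℕ, F ((Coprod.inl (ofAdd (1 : ℤ))) ^ m) = al H (m : ℤ) := by
    intro m
    have hm : (ofAdd (1 : ℤ)) ^ m = ofAdd (m : ℤ) := by
      rw [← ofAdd_nsmul]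
      congr 1
      simp
    rw [map_pow, hF, Coprod.lift_apply_inl, MonoidHom.comp_apply, ← map_pow, ← map_pow, hm, al]
    rfl
  have hFb : F (Coprod.inr h) = be h := by rw [hF, Coprod.lift_apply_inr, be]
  have himg : F ((Coprod.inl (ofAdd (1 : ℤ)) : (Multiplicative ℤ) ∗ H) ^ (2 * (n + 1) + 1)
        * Coprod.inr h) ∈
      Subsemigroup.closure {al H (-2), al H (2 * (n : ℤ) + 1) * be h} := by
    refine Subsemigroup.closure_induction (p := fun z _ =>
        F z ∈ Subsemigroup.closure {al H (-2), al H (2 * (n : ℤ) + 1) * be h})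
      (fun z hz => ?_)
      (fun u v _ _ hu hv => by
        show F (u * v) ∈ _
        rw [map_mul]
        exact mul_mem hu hv) hmem
    have hsrc : ((Coprod.inl (ofAdd (1 : ℤ)) : (Multiplicative ℤ) ∗ H))⁻¹
        * (Coprod.inl (ofAdd (1 : ℤ)))⁻¹ = Coprod.inl (ofAdd (-2 : ℤ)) := by
      rw [← map_inv, ← map_mul]
      congr 1
    rcases hz with rfl | rfl
    · show F _ ∈ _
      rw [hsrc, hF, Coprod.lift_apply_inl, MonoidHom.comp_apply]
      exact Subsemigroup.subset_closure (Set.mem_insert_iff.mpr (Or.inl rfl))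
    · show F _ ∈ _
      apply Subsemigroup.subset_closure
      right
      rw [map_mul, hFa, hFb]
      have : ((2 * n + 1 : ℕ) : ℤ) = 2 * (n : ℤ) + 1 := by push_cast; ring
      rw [this]
      rfl
  rw [map_mul, hFa, hFb] at himg
  have hcast : ((2 * (n + 1) + 1 : ℕ) : ℤ) = 2 * (n : ℤ) + 3 := by push_cast; ring
  rw [hcast] at himg
  exact key h hh n himg

end TakAux

open Multiplicative TakAux

theorem stmt_1 (H : Type*) [Group H] (h : H) (hh : h ≠ 1) :
    let a : (Multiplicative ℤ) ∗ H := Coprod.inl (Multiplicative.ofAdd (1 : ℤ))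
    let b : (Multiplicative ℤ) ∗ H := Coprod.inr h
    let S : ℕ → Subsemigroup ((Multiplicative ℤ) ∗ H) := fun n =>
      Subsemigroup.closure {a⁻¹ * a⁻¹, a ^ (2 * n + 1) * b}
    (∀ n, S n ≤ S (n + 1)) ∧
    (∀ n, ∃ A : Finset ((Multiplicative ℤ) ∗ H), A.card ≤ 2 ∧
      Subsemigroup.closure (A : Set ((Multiplicative ℤ) ∗ H)) = S n) ∧
    (∀ n, S n ≠ S (n + 1)) ∧
    ¬ ∃ p, ∀ n, p ≤ n → S n = S p := by
  intro a b S
  have hgen : ∀ n : ℕ, a ^ (2 * n + 1) * b = (a⁻¹ * a⁻¹) * (a ^ (2 * (n + 1) + 1) * b) := by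
    intro n
    have hp : a ^ (2 * (n + 1) + 1) = a ^ 2 * a ^ (2 * n + 1) := by
      rw [← pow_add]
      congr 1
      ring
    rw [hp, ← mul_assoc, ← mul_assoc]
    congr 1
    rw [mul_assoc]
    group
  have hchain : ∀ n, S n ≤ S (n + 1) := by
    intro n
    apply Subsemigroup.closure_le.mpr
    rintro z (rfl | rfl)
    · exact Subsemigroup.subset_closure (Or.inl rfl)
    · rw [hgen n]
      exact mul_mem (Subsemigroup.subset_closure (Or.inl rfl))
        (Subsemigroup.subset_closure (Or.inr rfl))
  have hstrict : ∀ n, S n ≠ S (n + 1) := by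
    intro n heq
    have hmem : a ^ (2 * (n + 1) + 1) * b ∈ S (n + 1) :=
      Subsemigroup.subset_closure (Or.inr rfl)
    rw [← heq] at hmem
    exact not_mem_coprod h hh n hmem
  refine ⟨hchain, ?_, hstrict, ?_⟩
  · intro n
    classical
    refine ⟨{a⁻¹ * a⁻¹, a ^ (2 * n + 1) * b}, ?_, ?_⟩
    · exact (Finset.card_insert_le _ _).trans (by simp)
    · congr 1
      rw [Finset.coe_insert, Finset.coe_singleton]
  · rintro ⟨p, hp⟩
    exact hstrict p (hp (p + 1) (Nat.le_succ p)).symm
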